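/- In the CIR multiple-jump tree, if y^n_k ≤ θ_* h with θ_* = (κθ/σ)², then the up move satisfies 0 ≤ y^{n+1}_{k_u(n,k)} − y^n_k ≤ C_* h, where one can take C_* = κθ + 2σ√(θ_* + κθ) + σ², for all h small enough. -/

import Mathlib

open Real

/-- The node values of the CIR binomial lattice. -/
noncomputable def latticeY (Y₀ σ h : ℝ) (n k : ℕ) : ℝ :=
  if 0 < Real.sqrt Y₀ + σ / 2 * (2 * (k : ℝ) - (n : ℝ)) * Real.sqrt h then
    (Real.sqrt Y₀ + σ / 2 * (2 * (k : ℝ) - (n : ℝ)) * Real.sqrt h) ^ 2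
  else 0

lemma posSq_step (a c : ℝ) (hc : 0 ≤ c) :
    (if 0 < a + c then (a + c) ^ 2 else 0) ≤
      (if 0 < a then a ^ 2 else 0) + 2 * c * Real.sqrt (if 0 < a then a ^ 2 else 0) + c ^ 2 := by
  have hs : Real.sqrt (if 0 < a then a ^ 2 else 0) = max a 0 := by
    split_ifs with h
    · rw [Real.sqrt_sq h.le, max_eq_left h.le]
    · simp [max_eq_right (not_lt.mp h)]
  have h2 : (max a 0) ^ 2 = (if 0 < a then a ^ 2 else 0) := by
    split_ifs with h
    · rw [max_eq_left h.le]
    · rw [max_eq_right (not_lt.mp h)]; ring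
  have h1 : (if 0 < a + c then (a + c) ^ 2 else 0) ≤ (max a 0 + c) ^ 2 := by
    split_ifs with h
    · have ha : a + c ≤ max a 0 + c := add_le_add_left (le_max_left a 0) c
      nlinarith [h.le]
    · positivity
  rw [hs]
  calc (if 0 < a + c then (a + c) ^ 2 else 0) ≤ (max a 0 + c) ^ 2 := h1
    _ = (max a 0) ^ 2 + 2 * c * (max a 0) + c ^ 2 := by ring
    _ = (if 0 < a then a ^ 2 else 0) + 2 * c * (max a 0) + c ^ 2 := by rw [h2]

lemma latticeY_nonneg (Y₀ σ h : ℝ) (n k : ℕ) : 0 ≤ latticeY Y₀ σ h n k := by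
  unfold latticeY; split_ifs with h'
  · positivity
  · exact le_rfl

lemma latticeY_step (Y₀ σ h : ℝ) (hc : 0 ≤ σ * Real.sqrt h) (m j : ℕ) :
    latticeY Y₀ σ h m (j + 1) ≤ latticeY Y₀ σ h m j
      + 2 * (σ * Real.sqrt h) * Real.sqrt (latticeY Y₀ σ h m j) + (σ * Real.sqrt h) ^ 2 := by
  have e : Real.sqrt Y₀ + σ / 2 * (2 * ((j + 1 : ℕ) : ℝ) - (m : ℝ)) * Real.sqrt h
      = (Real.sqrt Y₀ + σ / 2 * (2 * (j : ℝ) - (m : ℝ)) * Real.sqrt h) + σ * Real.sqrt h := by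
    push_cast; ring
  unfold latticeY
  rw [e]
  exact posSq_step _ _ hc

lemma latticeY_diag (Y₀ σ h : ℝ) (hc : 0 ≤ σ / 2 * Real.sqrt h) (n k : ℕ) :
    latticeY Y₀ σ h (n + 1) (k + 1) ≤ latticeY Y₀ σ h n k
      + 2 * (σ / 2 * Real.sqrt h) * Real.sqrt (latticeY Y₀ σ h n k) + (σ / 2 * Real.sqrt h) ^ 2 := by
  have e : Real.sqrt Y₀ + σ / 2 * (2 * ((k + 1 : ℕ) : ℝ) - ((n + 1 : ℕ) : ℝ)) * Real.sqrt h
      = (Real.sqrt Y₀ + σ / 2 * (2 * (k : ℝ) - (n : ℝ)) * Real.sqrt h) + σ / 2 * Real.sqrt h := by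
    push_cast; ring
  unfold latticeY
  rw [e]
  exact posSq_step _ _ hc

lemma latticeY_top (Y₀ σ h : ℝ) (hY₀ : 0 < Y₀) (hσ : 0 ≤ σ) (m : ℕ) :
    Y₀ ≤ latticeY Y₀ σ h (m + 1) (m + 1) := by
  have hin : Real.sqrt Y₀ ≤ Real.sqrt Y₀ + σ / 2 * (2 * ((m + 1 : ℕ) : ℝ) - ((m + 1 : ℕ) : ℝ)) * Real.sqrt h := by
    have : (0:ℝ) ≤ σ / 2 * (2 * ((m + 1 : ℕ) : ℝ) - ((m + 1 : ℕ) : ℝ)) * Real.sqrt h := by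
      have : (0:ℝ) ≤ 2 * ((m + 1 : ℕ) : ℝ) - ((m + 1 : ℕ) : ℝ) := by push_cast; linarith [Nat.cast_nonneg (α := ℝ) m]
      positivity
    linarith
  have hpos : 0 < Real.sqrt Y₀ + σ / 2 * (2 * ((m + 1 : ℕ) : ℝ) - ((m + 1 : ℕ) : ℝ)) * Real.sqrt h :=
    lt_of_lt_of_le (Real.sqrt_pos.mpr hY₀) hin
  unfold latticeY
  rw [if_pos hpos]
  nlinarith [Real.sq_sqrt hY₀.le, Real.sqrt_nonneg Y₀]

open scoped Classical in
/-- The "up jump" index k_u(n,k) of the CIR multiple-jump tree. -/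
noncomputable def kUp (Y₀ σ h κ θ : ℝ) (n k : ℕ) : ℕ :=
  let S := (Finset.Icc (k + 1) (n + 1)).filter fun j =>
    latticeY Y₀ σ h n k + κ * (θ - latticeY Y₀ σ h n k) * h ≤ latticeY Y₀ σ h (n + 1) j
  if hS : S.Nonempty then S.min' hS else n + 1

set_option maxHeartbeats 1000000 in
/-- Below the threshold θ_* h (θ_* = (κθ/σ)²), the up move of the CIR tree is of
size at most C_* h with C_* = κθ + 2σ√(θ_* + κθ) + σ², for all small h. -/
theorem up_move_small_node_bound
    (Y₀ σ κ θ : ℝ) (hY₀ : 0 < Y₀) (hσ : 0 < σ) (hκ : 0 < κ) (hθ : 0 < θ) :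
    ∃ h₀ > 0, ∀ h : ℝ, 0 < h → h < h₀ →
      ∀ n k : ℕ, k ≤ n →
        latticeY Y₀ σ h n k ≤ (κ * θ / σ) ^ 2 * h →
        0 ≤ latticeY Y₀ σ h (n + 1) (kUp Y₀ σ h κ θ n k) - latticeY Y₀ σ h n k ∧
        latticeY Y₀ σ h (n + 1) (kUp Y₀ σ h κ θ n k) - latticeY Y₀ σ h n k ≤
          (κ * θ + 2 * σ * Real.sqrt ((κ * θ / σ) ^ 2 + κ * θ) + σ ^ 2) * h := by
  classical
  have hθs0 : (0:ℝ) < (κ * θ / σ) ^ 2 := by positivity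
  refine ⟨min (Y₀ / ((κ * θ / σ) ^ 2 + κ * θ)) (θ / (κ * θ / σ) ^ 2), by positivity, ?_⟩
  intro h hh hhlt n k hkn hsmall
  have hh1 : h * ((κ * θ / σ) ^ 2 + κ * θ) < Y₀ := by
    have := lt_of_lt_of_le hhlt (min_le_left _ _)
    exact (lt_div_iff₀ (by positivity)).mp this
  have hh2 : h * (κ * θ / σ) ^ 2 < θ := by
    have := lt_of_lt_of_le hhlt (min_le_right _ _)
    exact (lt_div_iff₀ hθs0).mp this
  have hy0 : 0 ≤ latticeY Y₀ σ h n k := latticeY_nonneg _ _ _ _ _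
  have hyθ : latticeY Y₀ σ h n k ≤ θ := by nlinarith
  have hDy : latticeY Y₀ σ h n k ≤
      latticeY Y₀ σ h n k + κ * (θ - latticeY Y₀ σ h n k) * h := by
    nlinarith [mul_nonneg (mul_nonneg hκ.le (sub_nonneg.mpr hyθ)) hh.le]
  have hDub : latticeY Y₀ σ h n k + κ * (θ - latticeY Y₀ σ h n k) * h
      ≤ (κ * θ / σ) ^ 2 * h + κ * θ * h := by nlinarith
  have hDY₀ : latticeY Y₀ σ h n k + κ * (θ - latticeY Y₀ σ h n k) * h < Y₀ := by nlinarith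
  set S := (Finset.Icc (k + 1) (n + 1)).filter (fun j =>
    latticeY Y₀ σ h n k + κ * (θ - latticeY Y₀ σ h n k) * h ≤ latticeY Y₀ σ h (n + 1) j)
    with hSdef
  have hmem : n + 1 ∈ S := by
    rw [hSdef, Finset.mem_filter, Finset.mem_Icc]
    exact ⟨⟨by omega, le_rfl⟩, le_trans hDY₀.le (latticeY_top Y₀ σ h hY₀ hσ.le n)⟩
  have hS : S.Nonempty := ⟨n + 1, hmem⟩
  have hkup : kUp Y₀ σ h κ θ n k = S.min' hS := by
    unfold kUp
    exact dif_pos hS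
  set ku := kUp Y₀ σ h κ θ n k with hkudef
  clear_value ku
  have hkuS : ku ∈ S := by rw [hkup]; exact Finset.min'_mem S hS
  obtain ⟨hkuI, hkuD⟩ := Finset.mem_filter.mp hkuS
  obtain ⟨hku1, hku2⟩ := Finset.mem_Icc.mp hkuI
  constructor
  · linarith
  · rcases eq_or_lt_of_le hku1 with hcase | hcase
    · -- single jump: ku = k + 1
      clear hkup hkuS hkuI hmem hS hSdef
      clear S
      rw [← hcase]
      have hstep := latticeY_diag Y₀ σ h (by positivity) n k
      have hsq : Real.sqrt (latticeY Y₀ σ h n k) ≤ κ * θ / σ * Real.sqrt h := by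
        calc Real.sqrt (latticeY Y₀ σ h n k) ≤ Real.sqrt ((κ * θ / σ) ^ 2 * h) :=
              Real.sqrt_le_sqrt hsmall
          _ = κ * θ / σ * Real.sqrt h := by
              rw [Real.sqrt_mul (by positivity), Real.sqrt_sq (by positivity)]
      have hsh : Real.sqrt h ^ 2 = h := Real.sq_sqrt hh.le
      have hshn : 0 ≤ Real.sqrt h := Real.sqrt_nonneg h
      have hmm : Real.sqrt h * Real.sqrt h = h := Real.mul_self_sqrt hh.le
      have e1 : 2 * (σ / 2 * Real.sqrt h) * (κ * θ / σ * Real.sqrt h) = κ * θ * h := by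
        have : 2 * (σ / 2 * Real.sqrt h) * (κ * θ / σ * Real.sqrt h)
            = (σ * (κ * θ / σ)) * (Real.sqrt h * Real.sqrt h) := by ring
        rw [this, hmm, mul_div_cancel₀ _ (ne_of_gt hσ)]
      have h2' : 2 * (σ / 2 * Real.sqrt h) * Real.sqrt (latticeY Y₀ σ h n k) ≤ κ * θ * h := by
        rw [← e1]
        exact mul_le_mul_of_nonneg_left hsq (by positivity)
      have e2 : (σ / 2 * Real.sqrt h) ^ 2 = σ ^ 2 / 4 * h := by
        rw [mul_pow, hsh]; ring
      have hCh : (0:ℝ) ≤ 2 * σ * Real.sqrt ((κ * θ / σ) ^ 2 + κ * θ) * h := by positivity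
      have hσh : (0:ℝ) ≤ σ ^ 2 * h := by positivity
      nlinarith [hstep]
    · -- multiple jumps: k + 1 < ku
      have hnot : ku - 1 ∉ S := by
        intro hmem'
        have := Finset.min'_le S _ hmem'
        rw [← hkup] at this
        omega
      have hlt : latticeY Y₀ σ h (n + 1) (ku - 1)
          < latticeY Y₀ σ h n k + κ * (θ - latticeY Y₀ σ h n k) * h := by
        by_contra hcon
        exact hnot (by
          rw [hSdef, Finset.mem_filter, Finset.mem_Icc]
          exact ⟨⟨by omega, by omega⟩, not_lt.mp hcon⟩)
      clear hnot hkup hkuS hkuI hmem hS hSdef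
      clear S
      have hprev0 : 0 ≤ latticeY Y₀ σ h (n + 1) (ku - 1) := latticeY_nonneg _ _ _ _ _
      have hstep := latticeY_step Y₀ σ h (by positivity) (n + 1) (ku - 1)
      rw [Nat.sub_add_cancel (by omega : 1 ≤ ku)] at hstep
      have hsq : Real.sqrt (latticeY Y₀ σ h (n + 1) (ku - 1))
          ≤ Real.sqrt ((κ * θ / σ) ^ 2 + κ * θ) * Real.sqrt h := by
        calc Real.sqrt (latticeY Y₀ σ h (n + 1) (ku - 1))
            ≤ Real.sqrt (((κ * θ / σ) ^ 2 + κ * θ) * h) := by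
              apply Real.sqrt_le_sqrt
              nlinarith
          _ = Real.sqrt ((κ * θ / σ) ^ 2 + κ * θ) * Real.sqrt h := by
              rw [Real.sqrt_mul (by positivity)]
      have hsh : Real.sqrt h ^ 2 = h := Real.sq_sqrt hh.le
      have hshn : 0 ≤ Real.sqrt h := Real.sqrt_nonneg h
      have hdrift : κ * (θ - latticeY Y₀ σ h n k) * h ≤ κ * θ * h := by nlinarith
      have hmm : Real.sqrt h * Real.sqrt h = h := Real.mul_self_sqrt hh.le
      have e1 : 2 * (σ * Real.sqrt h) * (Real.sqrt ((κ * θ / σ) ^ 2 + κ * θ) * Real.sqrt h)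
          = 2 * σ * Real.sqrt ((κ * θ / σ) ^ 2 + κ * θ) * h := by
        have : 2 * (σ * Real.sqrt h) * (Real.sqrt ((κ * θ / σ) ^ 2 + κ * θ) * Real.sqrt h)
            = (2 * σ * Real.sqrt ((κ * θ / σ) ^ 2 + κ * θ)) * (Real.sqrt h * Real.sqrt h) := by
          ring
        rw [this, hmm]
      have h2' : 2 * (σ * Real.sqrt h) * Real.sqrt (latticeY Y₀ σ h (n + 1) (ku - 1))
          ≤ 2 * σ * Real.sqrt ((κ * θ / σ) ^ 2 + κ * θ) * h := by
        rw [← e1]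
        exact mul_le_mul_of_nonneg_left hsq (by positivity)
      have e2 : (σ * Real.sqrt h) ^ 2 = σ ^ 2 * h := by rw [mul_pow, hsh]
      nlinarith [hstep]
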